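/- arXiv:2605.10261 — 2 statements merged into one kernel-verified Lean document; each statement's English description precedes it below -/
import Mathlib

section
/- Combining the previous results: for binary labels with both classes nonempty, the SignalCAV vector equals exactly the difference of class means, v_sig = μ₁ − μ₀. -/
open Finset
open scoped Classical

variable {m : ℕ} {ι : Type*} [Fintype ι]

/-- Empirical mean of activations. -/
noncomputable def hMean (h : ι → EuclideanSpace ℝ (Fin m)) : EuclideanSpace ℝ (Fin m) :=
  ((Fintype.card ι : ℝ))⁻¹ • ∑ i, h i

/-- Empirical mean of labels. -/
noncomputable def tMean (t : ι → ℝ) : ℝ :=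
  ((Fintype.card ι : ℝ))⁻¹ * ∑ i, t i

/-- Empirical variance of labels. -/
noncomputable def tVar (t : ι → ℝ) : ℝ :=
  ((Fintype.card ι : ℝ))⁻¹ * ∑ i, (t i - tMean t) ^ 2

/-- The SignalCAV vector `v = (1/(σ_t² |X|)) Σ (h - h̄)(t - t̄)`. -/
noncomputable def signalCAV (h : ι → EuclideanSpace ℝ (Fin m)) (t : ι → ℝ) :
    EuclideanSpace ℝ (Fin m) :=
  (tVar t * (Fintype.card ι : ℝ))⁻¹ • ∑ i, (t i - tMean t) • (h i - hMean h)

/-- Mean of activations over the samples with label `val`. -/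
noncomputable def classMean (h : ι → EuclideanSpace ℝ (Fin m)) (t : ι → ℝ)
    (val : ℝ) : EuclideanSpace ℝ (Fin m) :=
  (((univ.filter fun i => t i = val).card : ℝ))⁻¹ •
    ∑ i ∈ univ.filter (fun i => t i = val), h i

/-- For binary labels with both classes nonempty, the SignalCAV vector equals
exactly the difference of class means: `v_sig = μ₁ - μ₀`. -/
theorem stmt11 (h : ι → EuclideanSpace ℝ (Fin m)) (t : ι → ℝ)
    (hbin : ∀ i, t i = 0 ∨ t i = 1)
    (h1 : (univ.filter fun i => t i = 1).Nonempty)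
    (h0 : (univ.filter fun i => t i = 0).Nonempty) :
    signalCAV h t = classMean h t 1 - classMean h t 0 := by
  classical
  set S1 := univ.filter (fun i => t i = 1) with hS1
  set S0 := univ.filter (fun i => t i = 0) with hS0
  have hcompl : univ.filter (fun i => ¬ t i = 1) = S0 := by
    apply Finset.filter_congr
    intro i _
    rcases hbin i with h' | h' <;> simp [h']
  have hsplit : ∀ f : ι → ℝ, ∑ i, f i = ∑ i ∈ S1, f i + ∑ i ∈ S0, f i := by
    intro f
    rw [← Finset.sum_filter_add_sum_filter_not univ (fun i => t i = 1) f, hcompl]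
  set n1 : ℝ := (S1.card : ℝ) with hn1
  set n0 : ℝ := (S0.card : ℝ) with hn0
  have hn1pos : 0 < n1 := by rw [hn1]; exact_mod_cast Finset.card_pos.mpr h1
  have hn0pos : 0 < n0 := by rw [hn0]; exact_mod_cast Finset.card_pos.mpr h0
  have hN : (Fintype.card ι : ℝ) = n1 + n0 := by
    have := hsplit (fun _ => (1 : ℝ))
    simpa [Finset.card_univ] using this
  set N : ℝ := (Fintype.card ι : ℝ) with hNdef
  have hNpos : (0:ℝ) < N := by rw [hN]; linarith
  have ht1 : ∀ i ∈ S1, t i = 1 := fun i hi => (Finset.mem_filter.mp hi).2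
  have ht0 : ∀ i ∈ S0, t i = 0 := fun i hi => (Finset.mem_filter.mp hi).2
  have hsumt : ∑ i, t i = n1 := by
    rw [hsplit t]
    have e1 : ∑ i ∈ S1, t i = n1 := by
      rw [Finset.sum_congr rfl ht1]; simp [hn1]
    have e0 : ∑ i ∈ S0, t i = 0 := by
      rw [Finset.sum_congr rfl ht0]; simp
    rw [e1, e0, add_zero]
  have htm : tMean t = n1 / N := by
    rw [tMean, hsumt]; ring
  have hvar : tVar t = n1 * n0 / N ^ 2 := by
    rw [tVar, htm]
    have e1 : ∑ i ∈ S1, (t i - n1/N) ^ 2 = n1 * (1 - n1/N)^2 := by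
      rw [Finset.sum_congr rfl (fun i hi => by rw [ht1 i hi] : ∀ i ∈ S1,
        (t i - n1/N)^2 = (1 - n1/N)^2)]
      simp [hn1, mul_comm]
    have e0 : ∑ i ∈ S0, (t i - n1/N) ^ 2 = n0 * (n1/N)^2 := by
      rw [Finset.sum_congr rfl (fun i hi => by rw [ht0 i hi]; ring : ∀ i ∈ S0,
        (t i - n1/N)^2 = (n1/N)^2)]
      simp [hn0, mul_comm]
    rw [hsplit, e1, e0]
    have h1N : 1 - n1/N = n0/N := by field_simp [hN]; linarith
    rw [h1N]
    have hNne : N ≠ 0 := ne_of_gt hNpos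
    calc N⁻¹ * (n1 * (n0 / N) ^ 2 + n0 * (n1 / N) ^ 2)
        = n1 * n0 * (n1 + n0) * (N⁻¹ * N⁻¹ * N⁻¹) := by ring
      _ = n1 * n0 / N ^ 2 := by rw [← hN]; field_simp
  ext x
  have happly : ∀ (s : Finset ι) (f : ι → EuclideanSpace ℝ (Fin m)),
      (∑ i ∈ s, f i) x = ∑ i ∈ s, f i x := by
    intro s f
    rw [WithLp.ofLp_sum]
    exact Finset.sum_apply x s _
  simp only [signalCAV, classMean, hMean]
  show (tVar t * N)⁻¹ * (∑ i, (t i - tMean t) • (h i - (N⁻¹ • ∑ j, h j))) x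
      = n1⁻¹ * (∑ i ∈ S1, h i) x - n0⁻¹ * (∑ i ∈ S0, h i) x
  rw [happly univ, happly S1, happly S0]
  simp only [PiLp.smul_apply, PiLp.sub_apply, smul_eq_mul, happly univ]
  set A1 : ℝ := ∑ i ∈ S1, h i x with hA1
  set A0 : ℝ := ∑ i ∈ S0, h i x with hA0
  have hAsum : ∑ i, h i x = A1 + A0 := hsplit _
  have hmain : ∑ i, (t i - tMean t) * (h i x - N⁻¹ * ∑ j, h j x)
      = (n0/N) * A1 - (n1/N) * A0 := by
    rw [htm, hAsum, hsplit]
    have e1 : ∑ i ∈ S1, (t i - n1/N) * (h i x - N⁻¹ * (A1 + A0))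
        = (1 - n1/N) * A1 - n1 * (1 - n1/N) * (N⁻¹ * (A1 + A0)) := by
      rw [Finset.sum_congr rfl (fun i hi => by rw [ht1 i hi] : ∀ i ∈ S1,
        (t i - n1/N) * (h i x - N⁻¹ * (A1 + A0)) = (1 - n1/N) * (h i x - N⁻¹ * (A1 + A0)))]
      rw [← Finset.mul_sum, Finset.sum_sub_distrib, Finset.sum_const, ← hA1]
      rw [nsmul_eq_mul, ← hn1]
      ring
    have e0 : ∑ i ∈ S0, (t i - n1/N) * (h i x - N⁻¹ * (A1 + A0))
        = -(n1/N) * A0 + n0 * (n1/N) * (N⁻¹ * (A1 + A0)) := by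
      rw [Finset.sum_congr rfl (fun i hi => by rw [ht0 i hi] : ∀ i ∈ S0,
        (t i - n1/N) * (h i x - N⁻¹ * (A1 + A0)) = (0 - n1/N) * (h i x - N⁻¹ * (A1 + A0)))]
      rw [← Finset.mul_sum, Finset.sum_sub_distrib, Finset.sum_const, ← hA0]
      rw [nsmul_eq_mul, ← hn0]
      ring
    rw [e1, e0]
    have hNinv : N * N⁻¹ = 1 := mul_inv_cancel₀ (ne_of_gt hNpos)
    linear_combination (A1/N - (A1+A0)*n1/N^2) * hN + (n1*N⁻¹*(A1+A0) - A1) * hNinv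
  rw [hmain, hvar]
  field_simp
end

section
/- Let T₁, T₂ : C → [0,1] on finite nonempty C. The integrated agreement ∫₀¹ [(1/|C|) Σ_c (𝟙(T₁(c)>α)𝟙(T₂(c)>α) + (1−𝟙(T₁(c)>α))(1−𝟙(T₂(c)>α)))] dα equals (1/|C|) Σ_c (1 − |T₁(c) − T₂(c)|). -/
open MeasureTheory

lemma agree_eq (a b : ℝ) (hab : a ≤ b) (α : ℝ) :
    ((if a > α then (1:ℝ) else 0) * (if b > α then (1:ℝ) else 0)
      + (1 - if a > α then (1:ℝ) else 0) * (1 - if b > α then (1:ℝ) else 0))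
    = 1 - (Set.Ico a b).indicator (fun _ => (1:ℝ)) α := by
  by_cases h1 : a > α
  · have h2 : b > α := lt_of_lt_of_le h1 hab
    simp [h1, h2, Set.indicator_apply, Set.mem_Ico, not_le.mpr h1]
  · by_cases h2 : b > α
    · simp [h1, h2, Set.indicator_apply, Set.mem_Ico, not_lt.mp h1]
    · simp [h1, h2, Set.indicator_apply, Set.mem_Ico, h2]

lemma indicator_intInt (a b u v : ℝ) :
    IntervalIntegrable ((Set.Ico a b).indicator (fun _ => (1:ℝ))) volume u v := by
  apply MeasureTheory.Integrable.intervalIntegrable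
  rw [integrable_indicator_iff measurableSet_Ico]
  exact (integrableOn_const_iff).mpr (Or.inr measure_Ico_lt_top)

lemma agree_intInt (a b u v : ℝ) (hab : a ≤ b) :
    IntervalIntegrable (fun α => (if a > α then (1:ℝ) else 0) * (if b > α then (1:ℝ) else 0)
      + (1 - if a > α then (1:ℝ) else 0) * (1 - if b > α then (1:ℝ) else 0)) volume u v := by
  have : (fun α => (if a > α then (1:ℝ) else 0) * (if b > α then (1:ℝ) else 0)
      + (1 - if a > α then (1:ℝ) else 0) * (1 - if b > α then (1:ℝ) else 0))
      = fun α => 1 - (Set.Ico a b).indicator (fun _ => (1:ℝ)) α := by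
    funext α; exact agree_eq a b hab α
  rw [this]
  exact (intervalIntegrable_const).sub (indicator_intInt a b u v)

lemma key (a b : ℝ) (ha : 0 ≤ a) (hab : a ≤ b) (hb : b ≤ 1) :
    ∫ α in (0:ℝ)..1, ((if a > α then (1:ℝ) else 0) * (if b > α then (1:ℝ) else 0)
      + (1 - if a > α then (1:ℝ) else 0) * (1 - if b > α then (1:ℝ) else 0))
    = 1 - (b - a) := by
  have hcongr : ∀ α, ((if a > α then (1:ℝ) else 0) * (if b > α then (1:ℝ) else 0)
      + (1 - if a > α then (1:ℝ) else 0) * (1 - if b > α then (1:ℝ) else 0))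
      = 1 - (Set.Ico a b).indicator (fun _ => (1:ℝ)) α := agree_eq a b hab
  rw [intervalIntegral.integral_congr (fun α _ => hcongr α)]
  rw [intervalIntegral.integral_sub intervalIntegrable_const (indicator_intInt a b 0 1)]
  have h01 : (0:ℝ) ≤ 1 := by norm_num
  rw [intervalIntegral.integral_const]
  have : ∫ α in (0:ℝ)..1, (Set.Ico a b).indicator (fun _ => (1:ℝ)) α = b - a := by
    rw [intervalIntegral.integral_of_le h01,
        MeasureTheory.setIntegral_indicator measurableSet_Ico]
    rw [MeasureTheory.setIntegral_const]
    have hset : volume (Set.Ioc 0 1 ∩ Set.Ico a b) = ENNReal.ofReal (b - a) := by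
      have hsub1 : Set.Ioo a b ⊆ Set.Ioc 0 1 ∩ Set.Ico a b := by
        intro x hx
        exact ⟨⟨lt_of_le_of_lt ha hx.1, le_trans (le_of_lt hx.2) hb⟩, le_of_lt hx.1, hx.2⟩
      have hsub2 : Set.Ioc 0 1 ∩ Set.Ico a b ⊆ Set.Icc a b := fun x hx => ⟨hx.2.1, le_of_lt hx.2.2⟩
      have h1 := measure_mono (μ := volume) hsub1
      have h2 := measure_mono (μ := volume) hsub2
      rw [Real.volume_Ioo] at h1
      rw [Real.volume_Icc] at h2
      exact le_antisymm h2 h1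
    rw [measureReal_def, hset, ENNReal.toReal_ofReal (by linarith), smul_eq_mul, mul_one]
  rw [this]; simp

/-- Averaging the thresholded agreement over concepts and integrating over all
thresholds yields the closed-form agreement score
`(1/|C|) Σ_c (1 - |T₁ c - T₂ c|)`. -/
theorem stmt17 {C : Type*} [Fintype C] [Nonempty C] (T₁ T₂ : C → ℝ)
    (h₁ : ∀ c, T₁ c ∈ Set.Icc (0:ℝ) 1) (h₂ : ∀ c, T₂ c ∈ Set.Icc (0:ℝ) 1) :
    ∫ α in (0:ℝ)..1,
        (1 / (Fintype.card C : ℝ)) * ∑ c,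
          ((if T₁ c > α then (1:ℝ) else 0) * (if T₂ c > α then (1:ℝ) else 0)
            + (1 - if T₁ c > α then (1:ℝ) else 0)
              * (1 - if T₂ c > α then (1:ℝ) else 0))
      = (1 / (Fintype.card C : ℝ)) * ∑ c, (1 - |T₁ c - T₂ c|) := by
  rw [intervalIntegral.integral_const_mul]
  congr 1
  have hInt : ∀ c : C, IntervalIntegrable (fun α =>
      (if T₁ c > α then (1:ℝ) else 0) * (if T₂ c > α then (1:ℝ) else 0)
      + (1 - if T₁ c > α then (1:ℝ) else 0) * (1 - if T₂ c > α then (1:ℝ) else 0))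
      volume 0 1 := by
    intro c
    rcases le_total (T₁ c) (T₂ c) with h | h
    · exact agree_intInt _ _ 0 1 h
    · have := agree_intInt (T₂ c) (T₁ c) 0 1 h
      apply IntervalIntegrable.congr_ae this
      filter_upwards with α
      ring
  rw [intervalIntegral.integral_finset_sum (fun c _ => hInt c)]
  apply Finset.sum_congr rfl
  intro c _
  rcases le_total (T₁ c) (T₂ c) with h | h
  · rw [key _ _ (h₁ c).1 h (h₂ c).2, abs_of_nonpos (by linarith)]; ring
  · have heq : ∀ α, ((if T₁ c > α then (1:ℝ) else 0) * (if T₂ c > α then (1:ℝ) else 0)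
      + (1 - if T₁ c > α then (1:ℝ) else 0) * (1 - if T₂ c > α then (1:ℝ) else 0))
      = ((if T₂ c > α then (1:ℝ) else 0) * (if T₁ c > α then (1:ℝ) else 0)
      + (1 - if T₂ c > α then (1:ℝ) else 0) * (1 - if T₁ c > α then (1:ℝ) else 0)) := by
      intro α; ring
    rw [intervalIntegral.integral_congr (fun α _ => heq α),
        key _ _ (h₂ c).1 h (h₁ c).2, abs_of_nonneg (by linarith)]
end
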